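/- Let L > 1 and ε ∈ (0,1]. Then for every continuously differentiable function v : ℝ → ℝ with v(−π/2) = v(π/2) = 0 and v(x) ≥ 0 for all x ∈ [−π/2, π/2], one has ∫_{−π/2}^{π/2} u_{ε,L}'(x)·v'(x) dx ≥ (1/L²)·∫_{−π/2}^{π/2} u_{ε,L}(x)·v(x) dx, where u_{ε,L}' denotes the derivative of u_{ε,L} (taken to be 0 at the finitely many points where u_{ε,L} is not differentiable). That is, u_{ε,L} is a weak supersolution of −u'' = (1/L²)u on (−π/2, π/2). -/

import Mathlib

open Real Set MeasureTheory intervalIntegral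

set_option maxHeartbeats 1000000 in
/-- For `L > 1` and `ε ∈ (0,1]`, the function
`u_{ε,L}(x) = min(cos(x/L), (1/ε)·cos x)` is a weak supersolution of
`−u'' = (1/L²)u` on `(−π/2, π/2)`: testing against any nonnegative `C¹` function
vanishing at `±π/2` gives `∫ u' v' ≥ (1/L²) ∫ u v`. -/
theorem stmt_13 (L ε : ℝ) (hL : 1 < L) (hε₀ : 0 < ε) (hε₁ : ε ≤ 1)
    (u : ℝ → ℝ)
    (hu : u = fun x => min (Real.cos (x / L)) ((1 / ε) * Real.cos x)) :
    ∀ v : ℝ → ℝ, ContDiff ℝ 1 v →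
      v (-(π / 2)) = 0 → v (π / 2) = 0 →
      (∀ x ∈ Set.Icc (-(π / 2)) (π / 2), 0 ≤ v x) →
      (∫ x in (-(π / 2))..(π / 2), deriv u x * deriv v x) ≥
        (1 / L ^ 2) * ∫ x in (-(π / 2))..(π / 2), u x * v x := by
  intro v hv hvl hvr hvnn
  have hL0 : (0:ℝ) < L := lt_trans one_pos hL
  have hc : (0:ℝ) < π / 2 := by positivity
  set g : ℝ → ℝ := fun x => ε * Real.cos (x / L) - Real.cos x with hg
  have hgc : Continuous g := by fun_prop
  -- g is strictly increasing on [0, π/2]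
  have hgd : ∀ x, HasDerivAt g (ε * (-Real.sin (x / L) * (1 / L)) - (-Real.sin x)) x := by
    intro x
    exact ((((hasDerivAt_id x).div_const L).cos).const_mul ε).sub (Real.hasDerivAt_cos x)
  have hgmono : StrictMonoOn g (Icc 0 (π / 2)) := by
    apply strictMonoOn_of_deriv_pos (convex_Icc _ _) hgc.continuousOn
    intro x hx
    rw [interior_Icc] at hx
    rw [(hgd x).deriv]
    have hxL : 0 < x / L := div_pos hx.1 hL0
    have hxLx : x / L < x := div_lt_self hx.1 hL
    have h1 : Real.sin (x / L) < Real.sin x := by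
      apply Real.strictMonoOn_sin ⟨by linarith, by linarith [hx.2]⟩
        ⟨by linarith [hx.1, hc], hx.2.le⟩ hxLx
    have h2 : 0 ≤ Real.sin (x / L) := Real.sin_nonneg_of_nonneg_of_le_pi hxL.le
      (by nlinarith [hx.2, Real.pi_pos])
    have hLi : 1 / L < 1 := (div_lt_one hL0).mpr hL
    have hεL : ε * (1 / L) ≤ 1 := by nlinarith
    nlinarith [mul_nonneg (sub_nonneg.mpr hεL) h2]
  have hg0 : g 0 ≤ 0 := by simp [hg]; linarith
  have hgC : 0 < g (π / 2) := by
    have : 0 < Real.cos (π / 2 / L) := by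
      apply Real.cos_pos_of_mem_Ioo
      constructor
      · linarith [div_pos hc hL0]
      · exact div_lt_self hc hL
    simp [hg, Real.cos_pi_div_two]
    exact mul_pos hε₀ this
  obtain ⟨a, ha, hga⟩ : ∃ a ∈ Icc 0 (π / 2), g a = 0 := by
    have := intermediate_value_Icc hc.le hgc.continuousOn (a := 0) (b := π / 2)
    obtain ⟨a, ha, hga⟩ := this ⟨hg0, hgC.le⟩
    exact ⟨a, ha, hga⟩
  have ha0 : 0 ≤ a := ha.1
  have hac : a ≤ π / 2 := ha.2
  -- evenness of g
  have hgev : ∀ x : ℝ, g |x| = g x := by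
    intro x
    simp only [hg]
    rw [show |x| / L = |x / L| by rw [abs_div, abs_of_pos hL0], Real.cos_abs, Real.cos_abs]
  have habs_le : ∀ x : ℝ, |x| ≤ a → g x ≤ 0 := by
    intro x hx
    rw [← hgev x, ← hga]
    exact hgmono.monotoneOn ⟨abs_nonneg x, le_trans hx hac⟩ ha hx
  have habs_lt : ∀ x : ℝ, |x| < a → g x < 0 := by
    intro x hx
    rw [← hgev x, ← hga]
    exact hgmono ⟨abs_nonneg x, le_trans hx.le hac⟩ ha hx
  have habs_ge : ∀ x : ℝ, a ≤ |x| → |x| ≤ π / 2 → 0 ≤ g x := by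
    intro x hx hx2
    rw [← hgev x, ← hga]
    exact hgmono.monotoneOn ha ⟨le_trans ha0 hx, hx2⟩ hx
  have habs_gt : ∀ x : ℝ, a < |x| → |x| ≤ π / 2 → 0 < g x := by
    intro x hx hx2
    rw [← hgev x, ← hga]
    exact hgmono ha ⟨le_trans ha0 hx.le, hx2⟩ hx
  -- min characterization
  have hmin1 : ∀ x : ℝ, g x ≤ 0 → u x = Real.cos (x / L) := by
    intro x hx
    rw [hu]
    apply min_eq_left
    have h2 : ε * Real.cos (x / L) ≤ Real.cos x := by simpa [hg] using hx
    calc Real.cos (x / L) = (1 / ε) * (ε * Real.cos (x / L)) := by field_simp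
    _ ≤ (1 / ε) * Real.cos x := by
        apply mul_le_mul_of_nonneg_left h2 (by positivity)
  have hmin2 : ∀ x : ℝ, 0 ≤ g x → u x = (1 / ε) * Real.cos x := by
    intro x hx
    rw [hu]
    apply min_eq_right
    have h2 : Real.cos x ≤ ε * Real.cos (x / L) := by
      have : 0 ≤ ε * Real.cos (x / L) - Real.cos x := hx
      linarith
    calc (1 / ε) * Real.cos x ≤ (1 / ε) * (ε * Real.cos (x / L)) := by
          apply mul_le_mul_of_nonneg_left h2 (by positivity)
    _ = Real.cos (x / L) := by field_simp
  -- derivatives of the two branches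
  have hvd : ∀ x : ℝ, HasDerivAt v (deriv v x) x := fun x =>
    ((hv.differentiable one_ne_zero) x).hasDerivAt
  have hvc : Continuous (deriv v) := hv.continuous_deriv le_rfl
  have hucont : Continuous u := by
    rw [hu]; fun_prop
  have hd1 : ∀ x : ℝ, HasDerivAt (fun y => Real.cos (y / L)) (-Real.sin (x / L) * (1 / L)) x :=
    fun x => ((hasDerivAt_id x).div_const L).cos
  have hd2 : ∀ x : ℝ, HasDerivAt (fun y => (1 / ε) * Real.cos y) ((1 / ε) * -Real.sin x) x :=
    fun x => (Real.hasDerivAt_cos x).const_mul (1 / ε)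
  have hdd1 : ∀ x : ℝ, HasDerivAt (fun y => -Real.sin (y / L) * (1 / L))
      (-(Real.cos (x / L) * (1 / L)) * (1 / L)) x :=
    fun x => (((hasDerivAt_id x).div_const L).sin.neg).mul_const (1 / L)
  have hdd2 : ∀ x : ℝ, HasDerivAt (fun y => (1 / ε) * -Real.sin y) ((1 / ε) * -Real.cos x) x :=
    fun x => ((Real.hasDerivAt_sin x).neg).const_mul (1 / ε)
  -- deriv u on the three regions
  have hderiv1 : ∀ x : ℝ, |x| < a → deriv u x = -Real.sin (x / L) * (1 / L) := by
    intro x hx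
    have hopen : IsOpen {y : ℝ | g y < 0} := isOpen_lt hgc continuous_const
    have hev : u =ᶠ[nhds x] fun y => Real.cos (y / L) := by
      filter_upwards [hopen.mem_nhds (habs_lt x hx)] with y hy
      exact hmin1 y (le_of_lt hy)
    rw [hev.deriv_eq, (hd1 x).deriv]
  have hderiv2 : ∀ x : ℝ, a < |x| → |x| ≤ π / 2 → deriv u x = (1 / ε) * -Real.sin x := by
    intro x hx hx2
    have hopen : IsOpen {y : ℝ | 0 < g y} := isOpen_lt continuous_const hgc
    have hev : u =ᶠ[nhds x] fun y => (1 / ε) * Real.cos y := by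
      filter_upwards [hopen.mem_nhds (habs_gt x hx hx2)] with y hy
      exact hmin2 y (le_of_lt hy)
    rw [hev.deriv_eq, (hd2 x).deriv]
  -- a.e. identification of deriv u * deriv v on the three pieces
  have hane : ∀ b : ℝ, ∀ᵐ x : ℝ, x ≠ b := by
    intro b
    refine MeasureTheory.ae_iff.mpr ?_
    simp only [ne_eq, not_not, Set.setOf_eq_eq_singleton]
    exact measure_singleton b
  have haa : -a ≤ a := by linarith
  have hpa : -(π / 2) ≤ -a := by linarith
  have hmem1 : ∀ᵐ x : ℝ, x ∈ Set.uIoc (-a) a →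
      deriv u x * deriv v x = -Real.sin (x / L) * (1 / L) * deriv v x := by
    filter_upwards [hane a] with x hxa hx
    rw [uIoc_of_le haa] at hx
    have : |x| < a := abs_lt.mpr ⟨hx.1, lt_of_le_of_ne hx.2 hxa⟩
    rw [hderiv1 x this]
  have hmem2 : ∀ᵐ x : ℝ, x ∈ Set.uIoc a (π / 2) →
      deriv u x * deriv v x = (1 / ε) * -Real.sin x * deriv v x := by
    filter_upwards [] with x hx
    rw [uIoc_of_le hac] at hx
    have hx0 : 0 < x := lt_of_le_of_lt ha0 hx.1
    rw [hderiv2 x (by rw [abs_of_pos hx0]; exact hx.1) (by rw [abs_of_pos hx0]; exact hx.2)]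
  have hmem3 : ∀ᵐ x : ℝ, x ∈ Set.uIoc (-(π / 2)) (-a) →
      deriv u x * deriv v x = (1 / ε) * -Real.sin x * deriv v x := by
    filter_upwards [hane (-a)] with x hxa hx
    rw [uIoc_of_le hpa] at hx
    have hxlt : x < -a := lt_of_le_of_ne hx.2 hxa
    have habs : |x| = -x := abs_of_neg (by linarith)
    rw [hderiv2 x (by rw [habs]; linarith) (by rw [habs]; linarith [hx.1])]
  -- interval integrability of deriv u * deriv v on each piece
  have hG1 : IntervalIntegrable (fun x => -Real.sin (x / L) * (1 / L) * deriv v x)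
      volume (-a) a := Continuous.intervalIntegrable (by fun_prop) _ _
  have hG2 : IntervalIntegrable (fun x => (1 / ε) * -Real.sin x * deriv v x)
      volume a (π / 2) := Continuous.intervalIntegrable (by fun_prop) _ _
  have hG3 : IntervalIntegrable (fun x => (1 / ε) * -Real.sin x * deriv v x)
      volume (-(π / 2)) (-a) := Continuous.intervalIntegrable (by fun_prop) _ _
  have hF1 : IntervalIntegrable (fun x => deriv u x * deriv v x) volume (-a) a :=
    hG1.congr_ae (Filter.EventuallyEq.symm ((ae_restrict_iff' measurableSet_uIoc).mpr hmem1))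
  have hF2 : IntervalIntegrable (fun x => deriv u x * deriv v x) volume a (π / 2) :=
    hG2.congr_ae (Filter.EventuallyEq.symm ((ae_restrict_iff' measurableSet_uIoc).mpr hmem2))
  have hF3 : IntervalIntegrable (fun x => deriv u x * deriv v x) volume (-(π / 2)) (-a) :=
    hG3.congr_ae (Filter.EventuallyEq.symm ((ae_restrict_iff' measurableSet_uIoc).mpr hmem3))
  -- split LHS
  have hsplit : (∫ x in (-(π / 2))..(π / 2), deriv u x * deriv v x)
      = (∫ x in (-(π / 2))..(-a), deriv u x * deriv v x)
      + (∫ x in (-a)..a, deriv u x * deriv v x)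
      + (∫ x in a..(π / 2), deriv u x * deriv v x) := by
    rw [integral_add_adjacent_intervals hF3 hF1, integral_add_adjacent_intervals (hF3.trans hF1) hF2]
  -- replace each piece by the explicit branch derivative
  have hP1 : (∫ x in (-a)..a, deriv u x * deriv v x)
      = ∫ x in (-a)..a, -Real.sin (x / L) * (1 / L) * deriv v x :=
    integral_congr_ae hmem1
  have hP2 : (∫ x in a..(π / 2), deriv u x * deriv v x)
      = ∫ x in a..(π / 2), (1 / ε) * -Real.sin x * deriv v x :=
    integral_congr_ae hmem2
  have hP3 : (∫ x in (-(π / 2))..(-a), deriv u x * deriv v x)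
      = ∫ x in (-(π / 2))..(-a), (1 / ε) * -Real.sin x * deriv v x :=
    integral_congr_ae hmem3
  -- integration by parts on each piece
  have hIBP1 : (∫ x in (-a)..a, -Real.sin (x / L) * (1 / L) * deriv v x)
      = -Real.sin (a / L) * (1 / L) * v a - -Real.sin (-a / L) * (1 / L) * v (-a)
        - ∫ x in (-a)..a, -(Real.cos (x / L) * (1 / L)) * (1 / L) * v x :=
    integral_mul_deriv_eq_deriv_mul (fun x _ => hdd1 x) (fun x _ => hvd x)
      (Continuous.intervalIntegrable (by fun_prop) _ _) (hvc.intervalIntegrable _ _)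
  have hIBP2 : (∫ x in a..(π / 2), (1 / ε) * -Real.sin x * deriv v x)
      = (1 / ε) * -Real.sin (π / 2) * v (π / 2) - (1 / ε) * -Real.sin a * v a
        - ∫ x in a..(π / 2), (1 / ε) * -Real.cos x * v x :=
    integral_mul_deriv_eq_deriv_mul (fun x _ => hdd2 x) (fun x _ => hvd x)
      (Continuous.intervalIntegrable (by fun_prop) _ _) (hvc.intervalIntegrable _ _)
  have hIBP3 : (∫ x in (-(π / 2))..(-a), (1 / ε) * -Real.sin x * deriv v x)
      = (1 / ε) * -Real.sin (-a) * v (-a) - (1 / ε) * -Real.sin (-(π / 2)) * v (-(π / 2))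
        - ∫ x in (-(π / 2))..(-a), (1 / ε) * -Real.cos x * v x :=
    integral_mul_deriv_eq_deriv_mul (fun x _ => hdd2 x) (fun x _ => hvd x)
      (Continuous.intervalIntegrable (by fun_prop) _ _) (hvc.intervalIntegrable _ _)
  -- rewrite the second-derivative integrals
  have hA1 : (∫ x in (-a)..a, -(Real.cos (x / L) * (1 / L)) * (1 / L) * v x)
      = -(1 / L ^ 2) * ∫ x in (-a)..a, Real.cos (x / L) * v x := by
    rw [← intervalIntegral.integral_const_mul]
    apply integral_congr
    intro x _
    ring
  have hA2 : (∫ x in a..(π / 2), (1 / ε) * -Real.cos x * v x)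
      = -∫ x in a..(π / 2), (1 / ε) * Real.cos x * v x := by
    rw [← intervalIntegral.integral_neg]
    apply integral_congr
    intro x _
    ring
  have hA3 : (∫ x in (-(π / 2))..(-a), (1 / ε) * -Real.cos x * v x)
      = -∫ x in (-(π / 2))..(-a), (1 / ε) * Real.cos x * v x := by
    rw [← intervalIntegral.integral_neg]
    apply integral_congr
    intro x _
    ring
  -- split RHS and identify u with the branches
  have huv : IntervalIntegrable (fun x => u x * v x) volume (-(π / 2)) (-a) ∧
      IntervalIntegrable (fun x => u x * v x) volume (-a) a ∧
      IntervalIntegrable (fun x => u x * v x) volume a (π / 2) :=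
    ⟨(hucont.mul hv.continuous).intervalIntegrable _ _,
     (hucont.mul hv.continuous).intervalIntegrable _ _,
     (hucont.mul hv.continuous).intervalIntegrable _ _⟩
  have hRsplit : (∫ x in (-(π / 2))..(π / 2), u x * v x)
      = (∫ x in (-(π / 2))..(-a), u x * v x)
      + (∫ x in (-a)..a, u x * v x)
      + (∫ x in a..(π / 2), u x * v x) := by
    rw [integral_add_adjacent_intervals huv.1 huv.2.1,
      integral_add_adjacent_intervals (huv.1.trans huv.2.1) huv.2.2]
  have hR1 : (∫ x in (-a)..a, u x * v x) = ∫ x in (-a)..a, Real.cos (x / L) * v x := by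
    apply integral_congr
    intro x hx
    rw [uIcc_of_le haa] at hx
    show u x * v x = Real.cos (x / L) * v x
    rw [hmin1 x (habs_le x (abs_le.mpr ⟨hx.1, hx.2⟩))]
  have hR2 : (∫ x in a..(π / 2), u x * v x) = ∫ x in a..(π / 2), (1 / ε) * Real.cos x * v x := by
    apply integral_congr
    intro x hx
    rw [uIcc_of_le hac] at hx
    have habsx : |x| = x := abs_of_nonneg (le_trans ha0 hx.1)
    show u x * v x = 1 / ε * Real.cos x * v x
    rw [hmin2 x (habs_ge x (by rw [habsx]; exact hx.1) (by rw [habsx]; exact hx.2))]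
  have hR3 : (∫ x in (-(π / 2))..(-a), u x * v x)
      = ∫ x in (-(π / 2))..(-a), (1 / ε) * Real.cos x * v x := by
    apply integral_congr
    intro x hx
    rw [uIcc_of_le hpa] at hx
    have habsx : |x| = -x := abs_of_nonpos (by linarith [hx.2])
    show u x * v x = 1 / ε * Real.cos x * v x
    rw [hmin2 x (habs_ge x (by rw [habsx]; linarith [hx.2]) (by rw [habsx]; linarith [hx.1]))]
  -- nonnegativity facts
  have hva : 0 ≤ v a := hvnn a ⟨by linarith, hac⟩
  have hvma : 0 ≤ v (-a) := hvnn (-a) ⟨by linarith, by linarith⟩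
  have hsinA : 0 ≤ Real.sin a :=
    Real.sin_nonneg_of_nonneg_of_le_pi ha0 (by nlinarith [Real.pi_pos])
  have hsinAL : 0 ≤ Real.sin (a / L) :=
    Real.sin_nonneg_of_nonneg_of_le_pi (div_nonneg ha0 hL0.le)
      (by nlinarith [div_le_self ha0 hL.le, Real.pi_pos])
  have hsinle : Real.sin (a / L) ≤ Real.sin a := by
    apply Real.strictMonoOn_sin.monotoneOn
      ⟨by linarith [div_nonneg ha0 hL0.le], by linarith [div_le_self ha0 hL.le]⟩ ⟨by linarith, hac⟩
      (div_le_self ha0 hL.le)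
  have hJ : 0 ≤ (1 / ε) * Real.sin a - Real.sin (a / L) * (1 / L) := by
    have h1 : Real.sin a ≤ (1 / ε) * Real.sin a := by
      have : (1:ℝ) ≤ 1 / ε := by rw [le_div_iff₀ hε₀]; linarith
      nlinarith
    have hLi : 1 / L ≤ 1 := by rw [div_le_one hL0]; linarith
    nlinarith
  have hBnn : 0 ≤ ∫ x in (-(π / 2))..(-a), (1 / ε) * Real.cos x * v x := by
    apply intervalIntegral.integral_nonneg hpa
    intro x hx
    have hcos : 0 ≤ Real.cos x := Real.cos_nonneg_of_mem_Icc ⟨hx.1, by linarith [hx.2]⟩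
    have hvx : 0 ≤ v x := hvnn x ⟨hx.1, by linarith [hx.2]⟩
    positivity
  have hCnn : 0 ≤ ∫ x in a..(π / 2), (1 / ε) * Real.cos x * v x := by
    apply intervalIntegral.integral_nonneg hac
    intro x hx
    have hcos : 0 ≤ Real.cos x := Real.cos_nonneg_of_mem_Icc ⟨by linarith [hx.1], hx.2⟩
    have hvx : 0 ≤ v x := hvnn x ⟨by linarith [hx.1], hx.2⟩
    positivity
  have hL2 : 1 / L ^ 2 ≤ 1 := by
    rw [div_le_one (by positivity)]
    nlinarith
  have hL2nn : 0 ≤ 1 / L ^ 2 := by positivity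
  -- final assembly
  have hLHS : (∫ x in (-(π / 2))..(π / 2), deriv u x * deriv v x)
      = ((1 / ε) * Real.sin a - Real.sin (a / L) * (1 / L)) * (v a + v (-a))
        + (1 / L ^ 2) * (∫ x in (-a)..a, Real.cos (x / L) * v x)
        + (∫ x in (-(π / 2))..(-a), (1 / ε) * Real.cos x * v x)
        + (∫ x in a..(π / 2), (1 / ε) * Real.cos x * v x) := by
    rw [hsplit, hP1, hP2, hP3, hIBP1, hIBP2, hIBP3, hA1, hA2, hA3, hvl, hvr]
    simp only [neg_div, Real.sin_neg]
    ring
  have hRHS : (∫ x in (-(π / 2))..(π / 2), u x * v x)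
      = (∫ x in (-(π / 2))..(-a), (1 / ε) * Real.cos x * v x)
        + (∫ x in (-a)..a, Real.cos (x / L) * v x)
        + (∫ x in a..(π / 2), (1 / ε) * Real.cos x * v x) := by
    rw [hRsplit, hR1, hR2, hR3]
  rw [ge_iff_le, hLHS, hRHS]
  clear hLHS hRHS hsplit hP1 hP2 hP3 hIBP1 hIBP2 hIBP3 hA1 hA2 hA3 hRsplit hR1 hR2 hR3
    hmem1 hmem2 hmem3 hF1 hF2 hF3 hG1 hG2 hG3 huv hgd hderiv1 hderiv2 hd1 hd2 hdd1 hdd2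
    hmin1 hmin2 hane hvd hvc hucont hgc hgmono hgev habs_le habs_lt habs_ge habs_gt
  nlinarith [mul_nonneg hJ hva, mul_nonneg hJ hvma,
    mul_nonneg (sub_nonneg.mpr hL2) hBnn, mul_nonneg (sub_nonneg.mpr hL2) hCnn]
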